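/- Let N be a positive integer and (Ω, ℱ, ℙ) a probability space. Let ι be a measurable space, let P : ι → Matrix (Fin N) (Fin N) ℝ be a measurable family of matrices such that P s is symmetric and idempotent for every s ∈ ι, and assume the operator norms ‖P s‖ are uniformly bounded. Let S : Ω → ι and E : Ω → ℝ^N be random variables that are independent, with 𝔼[‖E‖²] < ∞. Set Q = 𝔼[P(S)] (the entrywise expectation, a symmetric positive semidefinite matrix) and let W = Q^{1/2} be its positive semidefinite square root. Then 𝔼[‖P(S) E‖²] = 𝔼[‖W E‖²]. -/

import Mathlib

open MeasureTheory Matrix ProbabilityTheory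

private lemma quadform_expand {N : ℕ} (A : Matrix (Fin N) (Fin N) ℝ) (v : Fin N → ℝ)
    (hA : A.IsSymm) (hAi : A * A = A) :
    (A.mulVec v) ⬝ᵥ (A.mulVec v) = ∑ i, ∑ j, A i j * (v i * v j) := by
  have h1 : (A.mulVec v) ⬝ᵥ (A.mulVec v) = v ⬝ᵥ ((Aᵀ * A).mulVec v) := by
    simp [dotProduct, Matrix.mulVec, Matrix.mul_apply, Finset.sum_mul, Finset.mul_sum]
    rw [Finset.sum_comm]
    refine Finset.sum_congr rfl fun i _ => ?_
    rw [Finset.sum_comm]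
    refine Finset.sum_congr rfl fun j _ => Finset.sum_congr rfl fun k _ => by ring
  rw [h1, hA.eq, hAi]
  simp [dotProduct, Matrix.mulVec, Finset.mul_sum]
  exact Finset.sum_congr rfl fun i _ => Finset.sum_congr rfl fun j _ => by ring

private lemma proj_entry_bound {N : ℕ} (A : Matrix (Fin N) (Fin N) ℝ)
    (hA : A.IsSymm) (hAi : A * A = A) (i j : Fin N) : |A i j| ≤ 1 := by
  have hdiag : ∀ k, A k k = ∑ l, (A k l) ^ 2 := by
    intro k
    conv_lhs => rw [← hAi]
    rw [Matrix.mul_apply]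
    exact Finset.sum_congr rfl fun l _ => by rw [hA.apply l k]; ring
  have hij : (A i j) ^ 2 ≤ A i i := by
    rw [hdiag i]
    exact Finset.single_le_sum (f := fun l => (A i l) ^ 2) (fun l _ => sq_nonneg _)
      (Finset.mem_univ j)
  have hii_sq : (A i i) ^ 2 ≤ A i i := by
    have hs : (A i i) ^ 2 ≤ ∑ l, (A i l) ^ 2 :=
      Finset.single_le_sum (f := fun l => (A i l) ^ 2) (fun l _ => sq_nonneg _)
        (Finset.mem_univ i)
    rw [← hdiag i] at hs; exact hs
  have hii1 : A i i ≤ 1 := by nlinarith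
  nlinarith [sq_abs (A i j), abs_nonneg (A i j)]

/-- **Lemma 1 (ENSURE paper), random error vector version.**  Let `(Ω, Pr)` be a probability
space, `ι` a measurable space and `P : ι → Matrix (Fin N) (Fin N) ℝ` a measurable family of
orthogonal projection matrices (symmetric and idempotent) whose operator norms (as operators
on Euclidean space) are uniformly bounded.  Let `S : Ω → ι` and `E : Ω → ℝ^N` be independent
random variables with `𝔼[‖E‖²] < ∞`.  Let `Q = 𝔼[P(S)]` (entrywise expectation) and let `W`
be its positive semidefinite square root (`W` PSD with `W * W = Q`).  Then
`𝔼[‖P(S) E‖²] = 𝔼[‖W E‖²]`. -/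
theorem ensemble_projection_weighted_mse_indep
    {N : ℕ} (hN : 0 < N)
    {Ω : Type*} [MeasurableSpace Ω] (Pr : Measure Ω) [IsProbabilityMeasure Pr]
    {ι : Type*} [MeasurableSpace ι]
    (P : ι → Matrix (Fin N) (Fin N) ℝ)
    (hPmeas : ∀ i j, Measurable (fun s => P s i j))
    (hPsymm : ∀ s, (P s).IsSymm)
    (hPidem : ∀ s, P s * P s = P s)
    (C : ℝ) (hPbound : ∀ s, ‖Matrix.toEuclideanCLM (𝕜 := ℝ) (P s)‖ ≤ C)
    (S : Ω → ι) (E : Ω → Fin N → ℝ)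
    (hS : Measurable S) (hE : Measurable E)
    (hindep : IndepFun S E Pr)
    (hE2 : Integrable (fun ω => (E ω) ⬝ᵥ (E ω)) Pr)
    (Q : Matrix (Fin N) (Fin N) ℝ)
    (hQ : ∀ i j, Q i j = ∫ ω, P (S ω) i j ∂Pr)
    (W : Matrix (Fin N) (Fin N) ℝ) (hW : W.PosSemidef) (hWQ : W * W = Q) :
    ∫ ω, ((P (S ω)).mulVec (E ω)) ⬝ᵥ ((P (S ω)).mulVec (E ω)) ∂Pr
      = ∫ ω, (W.mulVec (E ω)) ⬝ᵥ (W.mulVec (E ω)) ∂Pr := by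
  -- symmetry of W
  have hWsymm : W.IsSymm := by
    have := hW.1
    rwa [Matrix.IsHermitian, Matrix.conjTranspose_eq_transpose_of_trivial] at this
  have hWWQ : Wᵀ * W = Q := by rw [hWsymm.eq, hWQ]
  -- integrability of entrywise products of E
  have hgmeas : ∀ i j : Fin N, Measurable (fun ω => E ω i * E ω j) := fun i j =>
    ((hE.eval (a := i)).mul (hE.eval (a := j)))
  have hgint : ∀ i j : Fin N, Integrable (fun ω => E ω i * E ω j) Pr := by
    intro i j
    refine hE2.mono' (hgmeas i j).aestronglyMeasurable ?_
    refine Filter.Eventually.of_forall fun ω => ?_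
    have h1 : |E ω i * E ω j| ≤ ((E ω i) ^ 2 + (E ω j) ^ 2) / 2 := by
      rw [abs_mul]
      nlinarith [sq_abs (E ω i), sq_abs (E ω j), sq_nonneg (|E ω i| - |E ω j|),
        abs_nonneg (E ω i), abs_nonneg (E ω j)]
    have h2 : (E ω i) ^ 2 ≤ (E ω) ⬝ᵥ (E ω) := by
      have : (E ω) ⬝ᵥ (E ω) = ∑ k, (E ω k) ^ 2 := by
        simp [dotProduct, sq]
      rw [this]
      exact Finset.single_le_sum (f := fun k => (E ω k) ^ 2) (fun k _ => sq_nonneg _)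
        (Finset.mem_univ i)
    have h3 : (E ω j) ^ 2 ≤ (E ω) ⬝ᵥ (E ω) := by
      have : (E ω) ⬝ᵥ (E ω) = ∑ k, (E ω k) ^ 2 := by
        simp [dotProduct, sq]
      rw [this]
      exact Finset.single_le_sum (f := fun k => (E ω k) ^ 2) (fun k _ => sq_nonneg _)
        (Finset.mem_univ j)
    have h4 : (0:ℝ) ≤ (E ω) ⬝ᵥ (E ω) := le_trans (sq_nonneg _) h2
    simp only [Real.norm_eq_abs]
    calc |E ω i * E ω j| ≤ ((E ω i) ^ 2 + (E ω j) ^ 2) / 2 := h1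
    _ ≤ (E ω) ⬝ᵥ (E ω) := by linarith
  -- integrability of the mixed terms
  have hfmeas : ∀ i j : Fin N, Measurable (fun ω => P (S ω) i j) := fun i j =>
    (hPmeas i j).comp hS
  have hfg_int : ∀ i j : Fin N,
      Integrable (fun ω => P (S ω) i j * (E ω i * E ω j)) Pr := by
    intro i j
    exact (hgint i j).bdd_mul (hfmeas i j).aestronglyMeasurable
      (c := 1) (Filter.Eventually.of_forall fun ω => by
        simpa [Real.norm_eq_abs] using proj_entry_bound _ (hPsymm (S ω)) (hPidem (S ω)) i j)
  -- key independence computation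
  have hkey : ∀ i j : Fin N,
      (∫ ω, P (S ω) i j * (E ω i * E ω j) ∂Pr)
        = Q i j * ∫ ω, E ω i * E ω j ∂Pr := by
    intro i j
    have hind2 : IndepFun (fun ω => P (S ω) i j) (fun ω => E ω i * E ω j) Pr :=
      hindep.comp (hPmeas i j) ((measurable_pi_apply i).mul (measurable_pi_apply j))
    have := hind2.integral_mul_eq_mul_integral (hfmeas i j).aestronglyMeasurable
      (hgmeas i j).aestronglyMeasurable
    simp only [Pi.mul_apply] at this
    rw [this, hQ i j]
  -- rewrite LHS
  have hLHS : ∫ ω, ((P (S ω)).mulVec (E ω)) ⬝ᵥ ((P (S ω)).mulVec (E ω)) ∂Pr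
      = ∑ i, ∑ j, ∫ ω, P (S ω) i j * (E ω i * E ω j) ∂Pr := by
    calc ∫ ω, ((P (S ω)).mulVec (E ω)) ⬝ᵥ ((P (S ω)).mulVec (E ω)) ∂Pr
        = ∫ ω, ∑ i, ∑ j, P (S ω) i j * (E ω i * E ω j) ∂Pr :=
          integral_congr_ae (Filter.Eventually.of_forall fun ω =>
            quadform_expand (P (S ω)) (E ω) (hPsymm (S ω)) (hPidem (S ω)))
      _ = ∑ i, ∑ j, ∫ ω, P (S ω) i j * (E ω i * E ω j) ∂Pr := by
          rw [integral_finset_sum _ (fun i _ => integrable_finset_sum _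
            (fun j _ => hfg_int i j))]
          exact Finset.sum_congr rfl fun i _ => integral_finset_sum _
            (fun j _ => hfg_int i j)
  -- rewrite RHS
  have hRHS : ∫ ω, (W.mulVec (E ω)) ⬝ᵥ (W.mulVec (E ω)) ∂Pr
      = ∑ i, ∑ j, Q i j * ∫ ω, E ω i * E ω j ∂Pr := by
    have hWexp : ∀ ω, (W.mulVec (E ω)) ⬝ᵥ (W.mulVec (E ω))
        = ∑ i, ∑ j, Q i j * (E ω i * E ω j) := by
      intro ω
      have h1 : (W.mulVec (E ω)) ⬝ᵥ (W.mulVec (E ω)) = (E ω) ⬝ᵥ ((Wᵀ * W).mulVec (E ω)) := by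
        simp [dotProduct, Matrix.mulVec, Matrix.mul_apply, Finset.sum_mul,
          Finset.mul_sum]
        rw [Finset.sum_comm]
        refine Finset.sum_congr rfl fun i _ => ?_
        rw [Finset.sum_comm]
        refine Finset.sum_congr rfl fun j _ => Finset.sum_congr rfl fun k _ => by ring
      rw [h1, hWWQ]
      simp [dotProduct, Matrix.mulVec, Finset.mul_sum]
      exact Finset.sum_congr rfl fun i _ => Finset.sum_congr rfl fun j _ => by ring
    calc ∫ ω, (W.mulVec (E ω)) ⬝ᵥ (W.mulVec (E ω)) ∂Pr
        = ∫ ω, ∑ i, ∑ j, Q i j * (E ω i * E ω j) ∂Pr :=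
          integral_congr_ae (Filter.Eventually.of_forall fun ω => hWexp ω)
      _ = ∑ i, ∑ j, ∫ ω, Q i j * (E ω i * E ω j) ∂Pr := by
          rw [integral_finset_sum _ (fun i _ => integrable_finset_sum _
            (fun j _ => (hgint i j).const_mul (Q i j)))]
          exact Finset.sum_congr rfl fun i _ => integral_finset_sum _
            (fun j _ => (hgint i j).const_mul (Q i j))
      _ = ∑ i, ∑ j, Q i j * ∫ ω, E ω i * E ω j ∂Pr := by
          exact Finset.sum_congr rfl fun i _ => Finset.sum_congr rfl fun j _ =>
            integral_const_mul _ _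
  rw [hLHS, hRHS]
  exact Finset.sum_congr rfl fun i _ => Finset.sum_congr rfl fun j _ => hkey i j
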